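/- For every oriented word u of rank k ≥ 2, the left order ≤_u on F_k induced by u is not right-invariant; equivalently, the positive cone P_u = {g : τ_u(g) > 0} is not invariant under conjugation in F_k. -/

import Mathlib

open FreeGroup

/-- A letter over the alphabet `{a_1,...,a_k, a_1⁻¹,...,a_k⁻¹}`:
`(i, true)` is the positive letter `a_i`, `(i, false)` is `a_i⁻¹`. -/
abbrev Letter (k : ℕ) := Fin k × Bool

/-- Formal inverse of a letter. -/
def invL {k : ℕ} (x : Letter k) : Letter k := (x.1, !x.2)

/-- An oriented word of rank `k`: each of the `2k` letters appears exactly once. -/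
def IsOriented {k : ℕ} (u : List (Letter k)) : Prop :=
  u.Nodup ∧ ∀ x : Letter k, x ∈ u

/-- `x` occurs to the left of `y` in `u`. -/
def leftOf {k : ℕ} (u : List (Letter k)) (x y : Letter k) : Prop :=
  u.idxOf x < u.idxOf y

instance {k : ℕ} (u : List (Letter k)) (x y : Letter k) : Decidable (leftOf u x y) :=
  inferInstanceAs (Decidable (_ < _))

/-- Number of occurrences of the two-letter word `xy` as a contiguous subword of `L`. -/
def cnt {k : ℕ} (L : List (Letter k)) (x y : Letter k) : ℕ :=
  (L.zip L.tail).count (x, y)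

/-- The case transition weight `α_u`, on a reduced word `L`. -/
noncomputable def alphaW {k : ℕ} (u L : List (Letter k)) : ℝ :=
  (∑ a : Fin k, ∑ b : Fin k,
      if leftOf u (a, false) (b, false) then (cnt L (a, true) (b, false) : ℝ) else 0)
  - ∑ a : Fin k, ∑ b : Fin k,
      if leftOf u (a, true) (b, true) then (cnt L (b, false) (a, true) : ℝ) else 0

/-- The letter transition weight `β_u`, on a reduced word `L`. -/
noncomputable def betaW {k : ℕ} (u L : List (Letter k)) : ℝ :=
  (∑ a : Fin k, ∑ b : Fin k,
      if leftOf u (a, false) (b, true) then (cnt L (a, true) (b, true) : ℝ) else 0)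
  - ∑ a : Fin k, ∑ b : Fin k,
      if leftOf u (a, false) (b, true) then (cnt L (b, false) (a, false) : ℝ) else 0

/-- The last letter weight `ω`, on a reduced word `L`. -/
noncomputable def omegaW {k : ℕ} (L : List (Letter k)) : ℝ :=
  match L.getLast? with
  | none => 0
  | some x => if x.2 then 1 / 2 else -(1 / 2)

/-- The weight `τ_u` induced by an oriented word `u`, evaluated on the reduced form. -/
noncomputable def tau {k : ℕ} (u : List (Letter k)) (g : FreeGroup (Fin k)) : ℝ :=
  alphaW u g.toWord + betaW u g.toWord + omegaW g.toWord

/-- The weight contribution `wtc_u` of a reduced two-letter word `xy`. -/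
noncomputable def wtc {k : ℕ} (u : List (Letter k)) (x y : Letter k) : ℝ :=
  if x.2 then (if leftOf u (x.1, false) y then 1 else 0)
  else (if leftOf u y (x.1, true) then -1 else 0)

/-- The inverse word of `u`. -/
def invWord {k : ℕ} (u : List (Letter k)) : List (Letter k) := (u.map invL).reverse

/-- A function `τ : G → ℝ` with small relative defect. -/
def SmallRelDefect {G : Type*} [Group G] (τ : G → ℝ) : Prop :=
  τ 1 = 0 ∧ ∀ g h : G, (g ≠ 1 ∨ h ≠ 1) → |τ g + τ h - τ (g * h)| < |τ g| + |τ h|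

lemma ite_add_split (P : Prop) [Decidable P] (x y : ℝ) :
    (if P then x + y else 0) = (if P then x else 0) + (if P then y else 0) := by
  split <;> simp

lemma sum_sum_ite2 {k : ℕ} (P : Fin k → Fin k → Prop) [∀ a b, Decidable (P a b)] (x y : Fin k) :
    (∑ a : Fin k, ∑ b : Fin k, if P a b then (if x = a ∧ y = b then (1:ℝ) else 0) else 0)
      = if P x y then 1 else 0 := by
  have h : ∀ a b, (if P a b then (if x = a ∧ y = b then (1:ℝ) else 0) else 0)
      = (if x = a ∧ y = b then (if P a b then (1:ℝ) else 0) else 0) := by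
    intro a b; split_ifs <;> simp_all
  have h2 : ∀ a, (∑ b : Fin k, if x = a ∧ y = b then (if P a b then (1:ℝ) else 0) else 0)
      = if x = a then (if P a y then 1 else 0) else 0 := by
    intro a; by_cases hxa : x = a <;> simp [hxa, Finset.sum_ite_eq]
  simp only [h, h2, Finset.sum_ite_eq, Finset.mem_univ, if_true]

lemma sum_sum_ite2' {k : ℕ} (P : Fin k → Fin k → Prop) [∀ a b, Decidable (P a b)] (x y : Fin k) :
    (∑ a : Fin k, ∑ b : Fin k, if P a b then (if x = b ∧ y = a then (1:ℝ) else 0) else 0)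
      = if P y x then 1 else 0 := by
  have h : ∀ a b, (if P a b then (if x = b ∧ y = a then (1:ℝ) else 0) else 0)
      = (if x = b ∧ y = a then (if P a b then (1:ℝ) else 0) else 0) := by
    intro a b; split_ifs <;> simp_all
  have h2 : ∀ a, (∑ b : Fin k, if x = b ∧ y = a then (if P a b then (1:ℝ) else 0) else 0)
      = if y = a then (if P a x then 1 else 0) else 0 := by
    intro a; by_cases hya : y = a <;> simp [hya, Finset.sum_ite_eq]
  simp only [h, h2, Finset.sum_ite_eq, Finset.mem_univ, if_true]

lemma ite_neg_one (P : Prop) [Decidable P] :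
    (if P then (-1:ℝ) else 0) = -(if P then 1 else 0) := by split <;> simp

lemma key {k : ℕ} (u : List (Letter k)) (Z : List (Letter k × Letter k)) :
    ((∑ a : Fin k, ∑ b : Fin k,
        if leftOf u (a, false) (b, false) then (Z.count ((a, true), (b, false)) : ℝ) else 0)
      - ∑ a : Fin k, ∑ b : Fin k,
        if leftOf u (a, true) (b, true) then (Z.count ((b, false), (a, true)) : ℝ) else 0)
    + ((∑ a : Fin k, ∑ b : Fin k,
        if leftOf u (a, false) (b, true) then (Z.count ((a, true), (b, true)) : ℝ) else 0)
      - ∑ a : Fin k, ∑ b : Fin k,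
        if leftOf u (a, false) (b, true) then (Z.count ((b, false), (a, false)) : ℝ) else 0)
    = (Z.map fun p => wtc u p.1 p.2).sum := by
  induction Z with
  | nil => simp
  | cons q Z ih =>
    obtain ⟨⟨q1, s1⟩, q2, s2⟩ := q
    simp only [List.count_cons, List.map_cons, List.sum_cons, beq_iff_eq, Prod.mk.injEq]
    push_cast
    simp only [ite_add_split, Finset.sum_add_distrib]
    cases s1 <;> cases s2 <;>
      (simp [sum_sum_ite2, sum_sum_ite2', wtc, ite_neg_one] at ih ⊢) <;> linarith [ih]

lemma tau_calc {k : ℕ} (u L : List (Letter k)) (hL : FreeGroup.reduce L = L) :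
    tau u (FreeGroup.mk L) = ((L.zip L.tail).map fun p => wtc u p.1 p.2).sum + omegaW L := by
  have hw : (FreeGroup.mk L).toWord = L := by rw [FreeGroup.toWord_mk, hL]
  unfold tau alphaW betaW cnt
  rw [hw, ← key u (L.zip L.tail)]

lemma leftOf_asymm {k : ℕ} {u : List (Letter k)} {x y : Letter k} (h : leftOf u x y) :
    ¬ leftOf u y x := Nat.lt_asymm h

lemma leftOf_total {k : ℕ} {u : List (Letter k)} (hu : IsOriented u) {x y : Letter k}
    (hxy : x ≠ y) (h : ¬ leftOf u x y) : leftOf u y x := by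
  have e : (instBEqProd : BEq (Letter k)) = instBEqOfDecidableEq := by
    refine beq_ext _ _ fun a b => ?_
    simp [beq_eq_decide]
  have hne : u.idxOf x ≠ u.idxOf y := by
    intro he
    rw [show (List.idxOf : Letter k → List (Letter k) → ℕ)
        = fun a l => @List.idxOf _ instBEqOfDecidableEq a l by rw [← e]] at he
    exact hxy ((@List.idxOf_inj _ instBEqOfDecidableEq _ _ _ _ (hu.2 x)).mp he)
  unfold leftOf at *
  omega

theorem stmt15 {k : ℕ} (hk : 2 ≤ k) (u : List (Letter k)) (hu : IsOriented u) :
    ¬ ∀ g h : FreeGroup (Fin k), 0 < tau u g → 0 < tau u (h * g * h⁻¹) := by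
  intro H
  set i : Fin k := ⟨0, by omega⟩ with hi
  set j : Fin k := ⟨1, by omega⟩ with hj
  have hij : i ≠ j := by simp [hi, hj, Fin.ext_iff]
  by_cases k0 : leftOf u (i, true) (j, true)
  case pos =>
    have n0 : ¬ leftOf u (j, true) (i, true) := leftOf_asymm k0
    by_cases k1 : leftOf u (i, false) (j, false)
    case pos =>
      have n1 : ¬ leftOf u (j, false) (i, false) := leftOf_asymm k1
      by_cases k2 : leftOf u (i, false) (i, true)
      case pos =>
        have n2 : ¬ leftOf u (i, true) (i, false) := leftOf_asymm k2
        by_cases k3 : leftOf u (i, true) (j, false)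
        case pos =>
          have n3 : ¬ leftOf u (j, false) (i, true) := leftOf_asymm k3
          refine absurd (H (FreeGroup.mk [(i, false), (j, true)]) (FreeGroup.mk [(i, false)]) ?_) ?_
          · rw [tau_calc u _ (by simp [hij, hij.symm])]
            norm_num [wtc, omegaW, k0, k1, k2, k3, n0, n1, n2, n3]
          · rw [show (FreeGroup.mk [(i, false)] * FreeGroup.mk [(i, false), (j, true)] * (FreeGroup.mk [(i, false)])⁻¹) = FreeGroup.mk [(i, false), (i, false), (j, true), (i, true)] by rw [FreeGroup.inv_mk, FreeGroup.mul_mk, FreeGroup.mul_mk]; rfl]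
            rw [tau_calc u _ (by simp [hij, hij.symm])]
            norm_num [wtc, omegaW, k0, k1, k2, k3, n0, n1, n2, n3]
        case neg =>
          have k3 : leftOf u (j, false) (i, true) := leftOf_total hu (by simp [hij, hij.symm]) k3
          have n3 : ¬ leftOf u (i, true) (j, false) := leftOf_asymm k3
          refine absurd (H (FreeGroup.mk [(j, false), (i, true), (i, true), (j, false)]) (FreeGroup.mk [(i, false)]) ?_) ?_
          · rw [tau_calc u _ (by simp [hij, hij.symm])]
            norm_num [wtc, omegaW, k0, k1, k2, k3, n0, n1, n2, n3]
          · rw [show (FreeGroup.mk [(i, false)] * FreeGroup.mk [(j, false), (i, true), (i, true), (j, false)] * (FreeGroup.mk [(i, false)])⁻¹) = FreeGroup.mk [(i, false), (j, false), (i, true), (i, true), (j, false), (i, true)] by rw [FreeGroup.inv_mk, FreeGroup.mul_mk, FreeGroup.mul_mk]; rfl]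
            rw [tau_calc u _ (by simp [hij, hij.symm])]
            norm_num [wtc, omegaW, k0, k1, k2, k3, n0, n1, n2, n3]
      case neg =>
        have k2 : leftOf u (i, true) (i, false) := leftOf_total hu (by simp [hij, hij.symm]) k2
        have n2 : ¬ leftOf u (i, false) (i, true) := leftOf_asymm k2
        by_cases k3 : leftOf u (i, false) (j, true)
        case pos =>
          have n3 : ¬ leftOf u (j, true) (i, false) := leftOf_asymm k3
          refine absurd (H (FreeGroup.mk [(i, true), (j, false)]) (FreeGroup.mk [(i, true)]) ?_) ?_
          · rw [tau_calc u _ (by simp [hij, hij.symm])]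
            norm_num [wtc, omegaW, k0, k1, k2, k3, n0, n1, n2, n3]
          · rw [show (FreeGroup.mk [(i, true)] * FreeGroup.mk [(i, true), (j, false)] * (FreeGroup.mk [(i, true)])⁻¹) = FreeGroup.mk [(i, true), (i, true), (j, false), (i, false)] by rw [FreeGroup.inv_mk, FreeGroup.mul_mk, FreeGroup.mul_mk]; rfl]
            rw [tau_calc u _ (by simp [hij, hij.symm])]
            norm_num [wtc, omegaW, k0, k1, k2, k3, n0, n1, n2, n3]
        case neg =>
          have k3 : leftOf u (j, true) (i, false) := leftOf_total hu (by simp [hij, hij.symm]) k3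
          have n3 : ¬ leftOf u (i, false) (j, true) := leftOf_asymm k3
          refine absurd (H (FreeGroup.mk [(i, true)]) (FreeGroup.mk [(j, false)]) ?_) ?_
          · rw [tau_calc u _ (by simp [hij, hij.symm])]
            norm_num [wtc, omegaW, k0, k1, k2, k3, n0, n1, n2, n3]
          · rw [show (FreeGroup.mk [(j, false)] * FreeGroup.mk [(i, true)] * (FreeGroup.mk [(j, false)])⁻¹) = FreeGroup.mk [(j, false), (i, true), (j, true)] by rw [FreeGroup.inv_mk, FreeGroup.mul_mk, FreeGroup.mul_mk]; rfl]
            rw [tau_calc u _ (by simp [hij, hij.symm])]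
            norm_num [wtc, omegaW, k0, k1, k2, k3, n0, n1, n2, n3]
    case neg =>
      have k1 : leftOf u (j, false) (i, false) := leftOf_total hu (by simp [hij, hij.symm]) k1
      have n1 : ¬ leftOf u (i, false) (j, false) := leftOf_asymm k1
      by_cases k2 : leftOf u (i, true) (j, false)
      case pos =>
        have n2 : ¬ leftOf u (j, false) (i, true) := leftOf_asymm k2
        refine absurd (H (FreeGroup.mk [(i, true)]) (FreeGroup.mk [(j, true)]) ?_) ?_
        · rw [tau_calc u _ (by simp [hij, hij.symm])]
          norm_num [wtc, omegaW, k0, k1, k2, n0, n1, n2]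
        · rw [show (FreeGroup.mk [(j, true)] * FreeGroup.mk [(i, true)] * (FreeGroup.mk [(j, true)])⁻¹) = FreeGroup.mk [(j, true), (i, true), (j, false)] by rw [FreeGroup.inv_mk, FreeGroup.mul_mk, FreeGroup.mul_mk]; rfl]
          rw [tau_calc u _ (by simp [hij, hij.symm])]
          norm_num [wtc, omegaW, k0, k1, k2, n0, n1, n2]
      case neg =>
        have k2 : leftOf u (j, false) (i, true) := leftOf_total hu (by simp [hij, hij.symm]) k2
        have n2 : ¬ leftOf u (i, true) (j, false) := leftOf_asymm k2
        by_cases k3 : leftOf u (i, false) (i, true)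
        case pos =>
          have n3 : ¬ leftOf u (i, true) (i, false) := leftOf_asymm k3
          refine absurd (H (FreeGroup.mk [(i, false), (j, true), (i, true), (j, false)]) (FreeGroup.mk [(i, false)]) ?_) ?_
          · rw [tau_calc u _ (by simp [hij, hij.symm])]
            norm_num [wtc, omegaW, k0, k1, k2, k3, n0, n1, n2, n3]
          · rw [show (FreeGroup.mk [(i, false)] * FreeGroup.mk [(i, false), (j, true), (i, true), (j, false)] * (FreeGroup.mk [(i, false)])⁻¹) = FreeGroup.mk [(i, false), (i, false), (j, true), (i, true), (j, false), (i, true)] by rw [FreeGroup.inv_mk, FreeGroup.mul_mk, FreeGroup.mul_mk]; rfl]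
            rw [tau_calc u _ (by simp [hij, hij.symm])]
            norm_num [wtc, omegaW, k0, k1, k2, k3, n0, n1, n2, n3]
        case neg =>
          have k3 : leftOf u (i, true) (i, false) := leftOf_total hu (by simp [hij, hij.symm]) k3
          have n3 : ¬ leftOf u (i, false) (i, true) := leftOf_asymm k3
          by_cases k4 : leftOf u (i, false) (j, true)
          case pos =>
            have n4 : ¬ leftOf u (j, true) (i, false) := leftOf_asymm k4
            refine absurd (H (FreeGroup.mk [(i, true), (j, true), (i, false), (j, false)]) (FreeGroup.mk [(i, true)]) ?_) ?_
            · rw [tau_calc u _ (by simp [hij, hij.symm])]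
              norm_num [wtc, omegaW, k0, k1, k2, k3, k4, n0, n1, n2, n3, n4]
            · rw [show (FreeGroup.mk [(i, true)] * FreeGroup.mk [(i, true), (j, true), (i, false), (j, false)] * (FreeGroup.mk [(i, true)])⁻¹) = FreeGroup.mk [(i, true), (i, true), (j, true), (i, false), (j, false), (i, false)] by rw [FreeGroup.inv_mk, FreeGroup.mul_mk, FreeGroup.mul_mk]; rfl]
              rw [tau_calc u _ (by simp [hij, hij.symm])]
              norm_num [wtc, omegaW, k0, k1, k2, k3, k4, n0, n1, n2, n3, n4]
          case neg =>
            have k4 : leftOf u (j, true) (i, false) := leftOf_total hu (by simp [hij, hij.symm]) k4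
            have n4 : ¬ leftOf u (i, false) (j, true) := leftOf_asymm k4
            refine absurd (H (FreeGroup.mk [(i, true)]) (FreeGroup.mk [(j, false)]) ?_) ?_
            · rw [tau_calc u _ (by simp [hij, hij.symm])]
              norm_num [wtc, omegaW, k0, k1, k2, k3, k4, n0, n1, n2, n3, n4]
            · rw [show (FreeGroup.mk [(j, false)] * FreeGroup.mk [(i, true)] * (FreeGroup.mk [(j, false)])⁻¹) = FreeGroup.mk [(j, false), (i, true), (j, true)] by rw [FreeGroup.inv_mk, FreeGroup.mul_mk, FreeGroup.mul_mk]; rfl]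
              rw [tau_calc u _ (by simp [hij, hij.symm])]
              norm_num [wtc, omegaW, k0, k1, k2, k3, k4, n0, n1, n2, n3, n4]
  case neg =>
    have k0 : leftOf u (j, true) (i, true) := leftOf_total hu (by simp [hij, hij.symm]) k0
    have n0 : ¬ leftOf u (i, true) (j, true) := leftOf_asymm k0
    by_cases k1 : leftOf u (i, false) (j, false)
    case pos =>
      have n1 : ¬ leftOf u (j, false) (i, false) := leftOf_asymm k1
      by_cases k2 : leftOf u (i, true) (j, false)
      case pos =>
        have n2 : ¬ leftOf u (j, false) (i, true) := leftOf_asymm k2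
        refine absurd (H (FreeGroup.mk [(j, true)]) (FreeGroup.mk [(i, false)]) ?_) ?_
        · rw [tau_calc u _ (by simp [hij, hij.symm])]
          norm_num [wtc, omegaW, k0, k1, k2, n0, n1, n2]
        · rw [show (FreeGroup.mk [(i, false)] * FreeGroup.mk [(j, true)] * (FreeGroup.mk [(i, false)])⁻¹) = FreeGroup.mk [(i, false), (j, true), (i, true)] by rw [FreeGroup.inv_mk, FreeGroup.mul_mk, FreeGroup.mul_mk]; rfl]
          rw [tau_calc u _ (by simp [hij, hij.symm])]
          norm_num [wtc, omegaW, k0, k1, k2, n0, n1, n2]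
      case neg =>
        have k2 : leftOf u (j, false) (i, true) := leftOf_total hu (by simp [hij, hij.symm]) k2
        have n2 : ¬ leftOf u (i, true) (j, false) := leftOf_asymm k2
        by_cases k3 : leftOf u (i, false) (j, true)
        case pos =>
          have n3 : ¬ leftOf u (j, true) (i, false) := leftOf_asymm k3
          by_cases k4 : leftOf u (j, false) (j, true)
          case pos =>
            have n4 : ¬ leftOf u (j, true) (j, false) := leftOf_asymm k4
            refine absurd (H (FreeGroup.mk [(i, false), (j, true), (i, true), (j, false)]) (FreeGroup.mk [(j, true)]) ?_) ?_
            · rw [tau_calc u _ (by simp [hij, hij.symm])]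
              norm_num [wtc, omegaW, k0, k1, k2, k3, k4, n0, n1, n2, n3, n4]
            · rw [show (FreeGroup.mk [(j, true)] * FreeGroup.mk [(i, false), (j, true), (i, true), (j, false)] * (FreeGroup.mk [(j, true)])⁻¹) = FreeGroup.mk [(j, true), (i, false), (j, true), (i, true), (j, false), (j, false)] by rw [FreeGroup.inv_mk, FreeGroup.mul_mk, FreeGroup.mul_mk]; rfl]
              rw [tau_calc u _ (by simp [hij, hij.symm])]
              norm_num [wtc, omegaW, k0, k1, k2, k3, k4, n0, n1, n2, n3, n4]
          case neg =>
            have k4 : leftOf u (j, true) (j, false) := leftOf_total hu (by simp [hij, hij.symm]) k4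
            have n4 : ¬ leftOf u (j, false) (j, true) := leftOf_asymm k4
            refine absurd (H (FreeGroup.mk [(i, false), (j, false), (i, true), (j, true)]) (FreeGroup.mk [(j, false)]) ?_) ?_
            · rw [tau_calc u _ (by simp [hij, hij.symm])]
              norm_num [wtc, omegaW, k0, k1, k2, k3, k4, n0, n1, n2, n3, n4]
            · rw [show (FreeGroup.mk [(j, false)] * FreeGroup.mk [(i, false), (j, false), (i, true), (j, true)] * (FreeGroup.mk [(j, false)])⁻¹) = FreeGroup.mk [(j, false), (i, false), (j, false), (i, true), (j, true), (j, true)] by rw [FreeGroup.inv_mk, FreeGroup.mul_mk, FreeGroup.mul_mk]; rfl]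
              rw [tau_calc u _ (by simp [hij, hij.symm])]
              norm_num [wtc, omegaW, k0, k1, k2, k3, k4, n0, n1, n2, n3, n4]
        case neg =>
          have k3 : leftOf u (j, true) (i, false) := leftOf_total hu (by simp [hij, hij.symm]) k3
          have n3 : ¬ leftOf u (i, false) (j, true) := leftOf_asymm k3
          refine absurd (H (FreeGroup.mk [(j, true)]) (FreeGroup.mk [(i, true)]) ?_) ?_
          · rw [tau_calc u _ (by simp [hij, hij.symm])]
            norm_num [wtc, omegaW, k0, k1, k2, k3, n0, n1, n2, n3]
          · rw [show (FreeGroup.mk [(i, true)] * FreeGroup.mk [(j, true)] * (FreeGroup.mk [(i, true)])⁻¹) = FreeGroup.mk [(i, true), (j, true), (i, false)] by rw [FreeGroup.inv_mk, FreeGroup.mul_mk, FreeGroup.mul_mk]; rfl]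
            rw [tau_calc u _ (by simp [hij, hij.symm])]
            norm_num [wtc, omegaW, k0, k1, k2, k3, n0, n1, n2, n3]
    case neg =>
      have k1 : leftOf u (j, false) (i, false) := leftOf_total hu (by simp [hij, hij.symm]) k1
      have n1 : ¬ leftOf u (i, false) (j, false) := leftOf_asymm k1
      by_cases k2 : leftOf u (i, false) (i, true)
      case pos =>
        have n2 : ¬ leftOf u (i, true) (i, false) := leftOf_asymm k2
        by_cases k3 : leftOf u (i, false) (j, true)
        case pos =>
          have n3 : ¬ leftOf u (j, true) (i, false) := leftOf_asymm k3
          refine absurd (H (FreeGroup.mk [(j, false), (i, true), (i, true), (j, false)]) (FreeGroup.mk [(i, true)]) ?_) ?_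
          · rw [tau_calc u _ (by simp [hij, hij.symm])]
            norm_num [wtc, omegaW, k0, k1, k2, k3, n0, n1, n2, n3]
          · rw [show (FreeGroup.mk [(i, true)] * FreeGroup.mk [(j, false), (i, true), (i, true), (j, false)] * (FreeGroup.mk [(i, true)])⁻¹) = FreeGroup.mk [(i, true), (j, false), (i, true), (i, true), (j, false), (i, false)] by rw [FreeGroup.inv_mk, FreeGroup.mul_mk, FreeGroup.mul_mk]; rfl]
            rw [tau_calc u _ (by simp [hij, hij.symm])]
            norm_num [wtc, omegaW, k0, k1, k2, k3, n0, n1, n2, n3]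
        case neg =>
          have k3 : leftOf u (j, true) (i, false) := leftOf_total hu (by simp [hij, hij.symm]) k3
          have n3 : ¬ leftOf u (i, false) (j, true) := leftOf_asymm k3
          refine absurd (H (FreeGroup.mk [(j, true), (i, false)]) (FreeGroup.mk [(i, true)]) ?_) ?_
          · rw [tau_calc u _ (by simp [hij, hij.symm])]
            norm_num [wtc, omegaW, k0, k1, k2, k3, n0, n1, n2, n3]
          · rw [show (FreeGroup.mk [(i, true)] * FreeGroup.mk [(j, true), (i, false)] * (FreeGroup.mk [(i, true)])⁻¹) = FreeGroup.mk [(i, true), (j, true), (i, false), (i, false)] by rw [FreeGroup.inv_mk, FreeGroup.mul_mk, FreeGroup.mul_mk]; rfl]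
            rw [tau_calc u _ (by simp [hij, hij.symm])]
            norm_num [wtc, omegaW, k0, k1, k2, k3, n0, n1, n2, n3]
      case neg =>
        have k2 : leftOf u (i, true) (i, false) := leftOf_total hu (by simp [hij, hij.symm]) k2
        have n2 : ¬ leftOf u (i, false) (i, true) := leftOf_asymm k2
        by_cases k3 : leftOf u (i, true) (j, false)
        case pos =>
          have n3 : ¬ leftOf u (j, false) (i, true) := leftOf_asymm k3
          refine absurd (H (FreeGroup.mk [(i, true)]) (FreeGroup.mk [(j, true)]) ?_) ?_
          · rw [tau_calc u _ (by simp [hij, hij.symm])]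
            norm_num [wtc, omegaW, k0, k1, k2, k3, n0, n1, n2, n3]
          · rw [show (FreeGroup.mk [(j, true)] * FreeGroup.mk [(i, true)] * (FreeGroup.mk [(j, true)])⁻¹) = FreeGroup.mk [(j, true), (i, true), (j, false)] by rw [FreeGroup.inv_mk, FreeGroup.mul_mk, FreeGroup.mul_mk]; rfl]
            rw [tau_calc u _ (by simp [hij, hij.symm])]
            norm_num [wtc, omegaW, k0, k1, k2, k3, n0, n1, n2, n3]
        case neg =>
          have k3 : leftOf u (j, false) (i, true) := leftOf_total hu (by simp [hij, hij.symm]) k3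
          have n3 : ¬ leftOf u (i, true) (j, false) := leftOf_asymm k3
          refine absurd (H (FreeGroup.mk [(j, false), (i, true)]) (FreeGroup.mk [(i, false)]) ?_) ?_
          · rw [tau_calc u _ (by simp [hij, hij.symm])]
            norm_num [wtc, omegaW, k0, k1, k2, k3, n0, n1, n2, n3]
          · rw [show (FreeGroup.mk [(i, false)] * FreeGroup.mk [(j, false), (i, true)] * (FreeGroup.mk [(i, false)])⁻¹) = FreeGroup.mk [(i, false), (j, false), (i, true), (i, true)] by rw [FreeGroup.inv_mk, FreeGroup.mul_mk, FreeGroup.mul_mk]; rfl]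
            rw [tau_calc u _ (by simp [hij, hij.symm])]
            norm_num [wtc, omegaW, k0, k1, k2, k3, n0, n1, n2, n3]
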